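/- Let Γ be a countable discrete group, let K be a compact topological space, and let p : K → ℓ¹(Γ) be a map such that p(x) is a probability distribution on Γ for every x (p(x) ≥ 0 and Σ_γ p(x)(γ) = 1), and such that p is continuous when ℓ¹(Γ) carries the topology of pointwise convergence. Then for every ε > 0 there exist a finite set F ⊆ Γ containing the identity and a continuous map q : K → ℓ¹(Γ) such that each q(x) is a probability distribution supported in F, and ‖p(x) − q(x)‖₁ < ε for every x ∈ K. -/

import Mathlib

/-- Let `Γ` be a countable discrete group, `K` compact, and `p : K → Prob(Γ) ⊆ ℓ¹(Γ)` continuous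
for the topology of pointwise convergence. For every `ε > 0` there are a finite `F ⊆ Γ`
containing `1` and a continuous `q : K → Prob(Γ)` supported in `F` with
`‖p(x) − q(x)‖₁ < ε` for all `x`. -/
theorem stmt_14 {Γ : Type*} [Group Γ] [Countable Γ]
    {K : Type*} [TopologicalSpace K] [CompactSpace K]
    (p : K → Γ → ℝ)
    (hpos : ∀ (x : K) (γ : Γ), 0 ≤ p x γ)
    (hsum : ∀ x : K, HasSum (p x) 1)
    (hcont : ∀ γ : Γ, Continuous fun x => p x γ)
    (ε : ℝ) (hε : 0 < ε) :
    ∃ (F : Finset Γ) (q : K → Γ → ℝ), (1 : Γ) ∈ F ∧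
      (∀ (x : K) (γ : Γ), 0 ≤ q x γ) ∧
      (∀ (x : K) (γ : Γ), γ ∉ F → q x γ = 0) ∧
      (∀ x : K, HasSum (q x) 1) ∧
      (∀ γ : Γ, Continuous fun x => q x γ) ∧
      ∀ x : K, ∑' γ : Γ, |p x γ - q x γ| < ε := by
  classical
  set δ := ε / 3 with hδdef
  have hδ : 0 < δ := by positivity
  -- choose for each x a finset with mass > 1 - δ
  have hchoice : ∀ x : K, ∃ s : Finset Γ, 1 - δ < ∑ γ ∈ s, p x γ := by
    intro x
    have h2 : Filter.Tendsto (fun s : Finset Γ => ∑ γ ∈ s, p x γ) Filter.atTop (nhds 1) :=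
      hsum x
    have hev : ∀ᶠ s : Finset Γ in Filter.atTop, 1 - δ < ∑ γ ∈ s, p x γ :=
      h2.eventually (eventually_gt_nhds (by linarith))
    obtain ⟨s, hs⟩ := hev.exists
    exact ⟨s, hs⟩
  choose Fx hFx using hchoice
  -- open cover
  have hcover : (Set.univ : Set K) ⊆ ⋃ x : K, {y | 1 - δ < ∑ γ ∈ Fx x, p y γ} := by
    intro y _
    exact Set.mem_iUnion.2 ⟨y, hFx y⟩
  obtain ⟨T, hT⟩ := isCompact_univ.elim_finite_subcover
    (fun x : K => {y | 1 - δ < ∑ γ ∈ Fx x, p y γ})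
    (fun x => isOpen_lt continuous_const (by fun_prop)) hcover
  set F : Finset Γ := insert 1 (T.sup Fx) with hFdef
  have h1F : (1 : Γ) ∈ F := Finset.mem_insert_self _ _
  have hSgt : ∀ y : K, 1 - δ < ∑ γ ∈ F, p y γ := by
    intro y
    obtain ⟨x, hxT, hy⟩ := Set.mem_iUnion₂.1 (hT (Set.mem_univ y))
    calc 1 - δ < ∑ γ ∈ Fx x, p y γ := hy
    _ ≤ ∑ γ ∈ F, p y γ := by
        apply Finset.sum_le_sum_of_subset_of_nonneg
        · exact (Finset.le_sup (f := Fx) hxT).trans (Finset.subset_insert _ _)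
        · intro γ _ _; exact hpos y γ
  have hSle : ∀ y : K, ∑ γ ∈ F, p y γ ≤ 1 := fun y =>
    sum_le_hasSum F (fun γ _ => hpos y γ) (hsum y)
  set q : K → Γ → ℝ := fun x γ =>
    if γ = 1 then p x 1 + (1 - ∑ γ ∈ F, p x γ) else if γ ∈ F then p x γ else 0
    with hqdef
  refine ⟨F, q, h1F, ?_, ?_, ?_, ?_, ?_⟩
  · intro x γ
    by_cases h1 : γ = 1
    · simp only [hqdef, h1, if_pos rfl]
      have := hSle x
      have := hpos x 1
      linarith
    · by_cases hF : γ ∈ F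
      · simp [hqdef, h1, hF, hpos x γ]
      · simp [hqdef, h1, hF]
  · intro x γ hγ
    have h1 : γ ≠ 1 := fun h => hγ (h ▸ h1F)
    simp [hqdef, h1, hγ]
  · intro x
    have hzero : ∀ γ ∉ F, q x γ = 0 := by
      intro γ hγ
      have h1 : γ ≠ 1 := fun h => hγ (h ▸ h1F)
      simp [hqdef, h1, hγ]
    have h := hasSum_sum_of_ne_finset_zero (s := F) (f := q x) (L := SummationFilter.unconditional Γ) hzero
    have hsumF : ∑ γ ∈ F, q x γ = 1 := by
      rw [← Finset.add_sum_erase F (q x) h1F]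
      have herase : ∑ γ ∈ F.erase 1, q x γ = ∑ γ ∈ F.erase 1, p x γ := by
        apply Finset.sum_congr rfl
        intro γ hγ
        have h1 : γ ≠ 1 := Finset.ne_of_mem_erase hγ
        have hF : γ ∈ F := Finset.mem_of_mem_erase hγ
        simp [hqdef, h1, hF]
      rw [herase]
      have : q x 1 = p x 1 + (1 - ∑ γ ∈ F, p x γ) := by simp [hqdef]
      rw [this, ← Finset.add_sum_erase F (p x) h1F]
      ring
    rwa [hsumF] at h
  · intro γ
    by_cases h1 : γ = 1
    · simp only [hqdef, h1, if_pos rfl]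
      fun_prop
    · by_cases hF : γ ∈ F
      · simp only [hqdef, h1, if_neg h1, if_pos hF]
        exact hcont γ
      · simp only [hqdef, if_neg h1, if_neg hF]
        exact continuous_const
  · intro x
    set S := ∑ γ ∈ F, p x γ with hSdef
    set g : Γ → ℝ := fun γ => |p x γ - q x γ| with hgdef
    have hg_off : ∀ γ ∉ F, g γ = p x γ := by
      intro γ hγ
      have h1 : γ ≠ 1 := fun h => hγ (h ▸ h1F)
      simp [hgdef, hqdef, h1, hγ, abs_of_nonneg (hpos x γ)]
    have hg_sum : Summable g := by
      have : g = fun γ => p x γ + (g γ - p x γ) := by funext γ; ring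
      rw [this]
      refine (hsum x).summable.add (summable_of_ne_finset_zero (s := F) ?_)
      intro γ hγ
      rw [hg_off γ hγ]; ring
    have hsplit := Summable.sum_add_tsum_compl (s := F) hg_sum
    have hsplitp := Summable.sum_add_tsum_compl (s := F) (hsum x).summable
    rw [(hsum x).tsum_eq] at hsplitp
    have hcompl : ∑' (γ : ↑((↑F : Set Γ)ᶜ)), g ↑γ = ∑' (γ : ↑((↑F : Set Γ)ᶜ)), p x ↑γ :=
      tsum_congr fun γ => hg_off γ γ.2
    have hsumFg : ∑ γ ∈ F, g γ = 1 - S := by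
      rw [← Finset.add_sum_erase F g h1F]
      have herase : ∑ γ ∈ F.erase 1, g γ = 0 := by
        apply Finset.sum_eq_zero
        intro γ hγ
        have h1 : γ ≠ 1 := Finset.ne_of_mem_erase hγ
        have hF : γ ∈ F := Finset.mem_of_mem_erase hγ
        simp [hgdef, hqdef, h1, hF]
      rw [herase]
      have : g 1 = 1 - S := by
        have hq1 : q x 1 = p x 1 + (1 - S) := by simp [hqdef, hSdef]
        rw [hgdef]
        simp only [hq1]
        rw [show p x 1 - (p x 1 + (1 - S)) = -(1 - S) by ring, abs_neg,
          abs_of_nonneg (by linarith [hSle x])]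
      rw [this]; ring
    have htot : ∑' γ, g γ = (1 - S) + (1 - S) := by
      rw [← hsplit, hsumFg, hcompl]
      have : ∑' (γ : ↑((↑F : Set Γ)ᶜ)), p x ↑γ = 1 - S := by linarith [hsplitp]
      rw [this]
    have hgt := hSgt x
    rw [show (∑' γ, |p x γ - q x γ|) = ∑' γ, g γ from rfl, htot]
    rw [hδdef] at hgt
    linarith
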